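/- Let f be a nonzero function in the Hardy space H² of the unit circle (i.e., f ∈ L²(S¹) with all negative Fourier coefficients vanishing). If f vanishes almost everywhere on some open arc I ⊂ S¹ of positive measure, then f = 0. -/

import Mathlib

open MeasureTheory AddCircle Metric Complex Set
open scoped ENNReal NNReal

namespace Stmt3Aux

set_option linter.unusedSectionVars false

variable {T : ℝ} [hT : Fact (0 < T)]

noncomputable def wc (x : AddCircle T) : ℂ := toCircle x

lemma norm_wc (x : AddCircle T) : ‖wc x‖ = 1 := Circle.norm_coe _

lemma wc_ne (x : AddCircle T) : wc x ≠ 0 := Circle.coe_ne_zero _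

lemma continuous_wc : Continuous (wc : AddCircle T → ℂ) :=
  continuous_induced_dom.comp continuous_toCircle

lemma wc_pow_eq_fourier (m : ℕ) (x : AddCircle T) : wc x ^ m = fourier (m : ℤ) x := by
  induction m with
  | zero => simp
  | succ n ih =>
    rw [pow_succ, ih, show ((n + 1 : ℕ) : ℤ) = (n : ℤ) + 1 by push_cast; ring, fourier_add]
    congr 1
    simp [wc, fourier_apply]

noncomputable def ker (f : AddCircle T → ℂ) (m : ℕ) (z : ℂ) (x : AddCircle T) : ℂ :=
  f x * (starRingEnd ℂ) (wc x) ^ m * wc x * (wc x - z)⁻¹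

noncomputable def G (f : AddCircle T → ℂ) (m : ℕ) (z : ℂ) : ℂ :=
  ∫ x, ker f m z x ∂haarAddCircle

lemma ker_zero (f : AddCircle T → ℂ) (m : ℕ) (x : AddCircle T) :
    ker f m 0 x = f x * (starRingEnd ℂ) (wc x) ^ m := by
  rw [ker, sub_zero, mul_assoc, mul_inv_cancel₀ (wc_ne x), mul_one]

lemma integral_conj_pow (f : AddCircle T → ℂ) (m : ℕ) :
    ∫ x, f x * (starRingEnd ℂ) (wc x) ^ m ∂haarAddCircle = fourierCoeff f m := by
  rw [fourierCoeff]
  refine integral_congr_ae (Filter.Eventually.of_forall fun x => ?_)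
  show _ = fourier (-(m:ℤ)) x • f x
  rw [smul_eq_mul, fourier_neg, ← wc_pow_eq_fourier, map_pow, mul_comm]

lemma integral_pow (f : AddCircle T → ℂ) (m : ℕ) :
    ∫ x, f x * wc x ^ m ∂haarAddCircle = fourierCoeff f (-(m : ℤ)) := by
  rw [fourierCoeff]
  refine integral_congr_ae (Filter.Eventually.of_forall fun x => ?_)
  show _ = fourier (-(-(m:ℤ))) x • f x
  rw [smul_eq_mul, neg_neg, ← wc_pow_eq_fourier, mul_comm]

lemma aesm_ker (f : AddCircle T → ℂ) (hfm : AEStronglyMeasurable f haarAddCircle) (m : ℕ) (z : ℂ) :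
    AEStronglyMeasurable (ker f m z) haarAddCircle := by
  refine ((hfm.mul ?_).mul ?_).mul ?_
  · exact ((RCLike.continuous_conj.comp continuous_wc).pow m).aestronglyMeasurable
  · exact continuous_wc.aestronglyMeasurable
  · exact ((continuous_wc.sub continuous_const).measurable.inv).aestronglyMeasurable

lemma norm_ker (f : AddCircle T → ℂ) (m : ℕ) (z : ℂ) (x : AddCircle T) :
    ‖ker f m z x‖ = ‖f x‖ * ‖(wc x - z)‖⁻¹ := by
  rw [ker, norm_mul, norm_mul, norm_mul, norm_pow, RCLike.norm_conj, norm_wc, norm_inv]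
  simp

lemma integrable_ker {f : AddCircle T → ℂ} (hfi : Integrable f haarAddCircle) (m : ℕ) {z : ℂ}
    {δ : ℝ} (hδ : 0 < δ)
    (hb : ∀ᵐ x ∂(haarAddCircle : Measure (AddCircle T)), f x ≠ 0 → δ ≤ ‖wc x - z‖) :
    Integrable (ker f m z) haarAddCircle := by
  refine Integrable.mono' (hfi.norm.mul_const δ⁻¹) (aesm_ker f hfi.1 m z) ?_
  filter_upwards [hb] with x hx
  by_cases hfx : f x = 0
  · rw [norm_ker, hfx]
    simp only [norm_zero, zero_mul]
    positivity
  · rw [norm_ker]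
    gcongr
    exact hx hfx

lemma integrable_mul_pow {f : AddCircle T → ℂ} (hfi : Integrable f haarAddCircle) (k : ℕ) :
    Integrable (fun x => f x * wc x ^ k) haarAddCircle := by
  refine Integrable.mono' hfi.norm
    (hfi.1.mul ((continuous_wc.pow _).aestronglyMeasurable)) ?_
  refine Filter.Eventually.of_forall fun x => ?_
  rw [norm_mul, norm_pow, norm_wc, one_pow, mul_one]

section Main
variable {f : AddCircle T → ℂ}

/-- The Cauchy transform vanishes outside the closed unit disc, thanks to the Hardy
hypothesis. -/
lemma G0_ext (hfi : Integrable f haarAddCircle)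
    (hHardy : ∀ n : ℤ, n < 0 → fourierCoeff f n = 0) {z : ℂ} (hz : 1 < ‖z‖) :
    G f 0 z = 0 := by
  have hzne : z ≠ 0 := by
    intro h; rw [h, norm_zero] at hz; linarith
  have hinv : ‖z⁻¹‖ < 1 := by
    rw [norm_inv]
    rw [inv_lt_one_iff₀]; right; exact hz
  -- pointwise expansion of the kernel as a geometric series
  have key : ∀ x : AddCircle T, HasSum
      (fun n : ℕ => -(f x * wc x ^ (n + 1) * (z⁻¹) ^ (n + 1))) (ker f 0 z x) := by
    intro x
    have hr : ‖wc x * z⁻¹‖ < 1 := by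
      rw [norm_mul, norm_wc, one_mul]; exact hinv
    have h0 := (hasSum_geometric_of_norm_lt_one hr).mul_left (-(f x * (wc x * z⁻¹)))
    have hwz : wc x - z ≠ 0 := by
      intro h
      have := norm_wc x
      rw [sub_eq_zero] at h
      rw [h] at this; linarith
    convert h0 using 2 with n
    · rfl
    · ring
    · -- -(f x * (wc x * z⁻¹)) * (1 - wc x * z⁻¹)⁻¹ = ker f 0 z x
      rw [ker, pow_zero, mul_one]
      have h2 : z - wc x ≠ 0 := by
        intro h; apply hwz; rw [← neg_eq_zero, neg_sub]; exact h
      have h3 : (1 : ℂ) - wc x * z⁻¹ = (z - wc x) * z⁻¹ := by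
        rw [sub_mul, mul_inv_cancel₀ hzne]
      rw [h3, mul_inv, inv_inv]
      rw [show wc x - z = -(z - wc x) by ring, inv_neg]
      rw [show -(f x * (wc x * z⁻¹)) * ((z - wc x)⁻¹ * z)
            = -(f x * wc x * (z - wc x)⁻¹) * (z⁻¹ * z) by ring, inv_mul_cancel₀ hzne]
      ring
  have hterm : ∀ n : ℕ, Integrable (fun x => -(f x * wc x ^ (n + 1) * (z⁻¹) ^ (n + 1)))
      haarAddCircle := fun n => (((integrable_mul_pow hfi (n + 1)).mul_const _).neg)
  have hsum : Summable fun n : ℕ =>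
      ∫ x, ‖-(f x * wc x ^ (n + 1) * (z⁻¹) ^ (n + 1))‖ ∂haarAddCircle := by
    have heq : ∀ n : ℕ, (∫ x, ‖-(f x * wc x ^ (n + 1) * (z⁻¹) ^ (n + 1))‖ ∂haarAddCircle)
        = (∫ x, ‖f x‖ ∂haarAddCircle) * ‖z⁻¹‖ ^ (n + 1) := by
      intro n
      rw [← integral_mul_const]
      refine integral_congr_ae (Filter.Eventually.of_forall fun x => ?_)
      show ‖-(f x * wc x ^ (n + 1) * (z⁻¹) ^ (n + 1))‖ = ‖f x‖ * ‖z⁻¹‖ ^ (n + 1)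
      rw [norm_neg, norm_mul, norm_mul, norm_pow, norm_pow, norm_wc, one_pow, mul_one]
    simp_rw [heq, pow_succ', ← mul_assoc]
    exact (summable_geometric_of_lt_one (norm_nonneg _) hinv).mul_left _
  have hswap := integral_tsum_of_summable_integral_norm hterm hsum
  have htsum : ∀ x : AddCircle T,
      (∑' n : ℕ, -(f x * wc x ^ (n + 1) * (z⁻¹) ^ (n + 1))) = ker f 0 z x :=
    fun x => (key x).tsum_eq
  rw [G]
  rw [show (∫ x, ker f 0 z x ∂haarAddCircle)
      = ∫ x, (∑' n : ℕ, -(f x * wc x ^ (n + 1) * (z⁻¹) ^ (n + 1))) ∂haarAddCircle from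
    integral_congr_ae (Filter.Eventually.of_forall fun x => (htsum x).symm), ← hswap]
  have hzero : ∀ n : ℕ, (∫ x, -(f x * wc x ^ (n + 1) * (z⁻¹) ^ (n + 1)) ∂haarAddCircle) = 0 := by
    intro n
    have : (∫ x, -(f x * wc x ^ (n + 1) * (z⁻¹) ^ (n + 1)) ∂haarAddCircle)
        = -((∫ x, f x * wc x ^ (n + 1) ∂haarAddCircle) * (z⁻¹) ^ (n + 1)) := by
      rw [← integral_mul_const, ← integral_neg]
    rw [this, integral_pow, hHardy _ (by omega), zero_mul, neg_zero]
  simp_rw [hzero, tsum_zero]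


/-- Differentiability of the Cauchy transform at a point staying (a.e. w.r.t. the support
of `f`) at distance `δ` from the relevant part of the circle. -/
lemma diffAt (hfi : Integrable f haarAddCircle) {z₁ : ℂ} {r δ : ℝ} (hr : 0 < r) (hδ : 0 < δ)
    (hb : ∀ᵐ x ∂(haarAddCircle : Measure (AddCircle T)),
      f x ≠ 0 → ∀ z ∈ ball z₁ r, δ ≤ ‖wc x - z‖) :
    DifferentiableAt ℂ (G f 0) z₁ := by
  have hb₁ : ∀ᵐ x ∂(haarAddCircle : Measure (AddCircle T)), f x ≠ 0 → δ ≤ ‖wc x - z₁‖ := by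
    filter_upwards [hb] with x hx hfx
    exact hx hfx z₁ (mem_ball_self hr)
  have key := hasDerivAt_integral_of_dominated_loc_of_deriv_le (μ := haarAddCircle)
    (F := fun z x => ker f 0 z x)
    (F' := fun z x => f x * (starRingEnd ℂ) (wc x) ^ 0 * wc x * ((wc x - z) ^ 2)⁻¹)
    (bound := fun x => ‖f x‖ * (δ ^ 2)⁻¹) (x₀ := z₁) (s := ball z₁ r) (ball_mem_nhds z₁ hr) ?_ ?_ ?_ ?_ ?_ ?_
  · exact key.2.differentiableAt
  · exact Filter.Eventually.of_forall fun z => aesm_ker f hfi.1 0 z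
  · exact integrable_ker hfi 0 hδ hb₁
  · refine ((hfi.1.mul ?_).mul ?_).mul ?_
    · exact ((RCLike.continuous_conj.comp continuous_wc).pow 0).aestronglyMeasurable
    · exact continuous_wc.aestronglyMeasurable
    · exact (((continuous_wc.sub continuous_const).pow 2).measurable.inv).aestronglyMeasurable
  · -- bound on the derivative
    filter_upwards [hb] with x hx
    intro z hz
    by_cases hfx : f x = 0
    · rw [hfx]
      simp only [zero_mul, norm_zero]
      positivity
    · have h1 := hx hfx z hz
      rw [norm_mul, norm_mul, norm_mul, norm_pow, RCLike.norm_conj, norm_wc, norm_inv, norm_pow]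
      simp only [pow_zero, mul_one, one_pow]
      gcongr
  · exact hfi.norm.mul_const _
  · -- differentiability of the integrand
    filter_upwards [hb] with x hx
    intro z hz
    by_cases hfx : f x = 0
    · have hker : (fun z : ℂ => ker f 0 z x) = fun _ => 0 := by
        funext z; rw [ker, hfx, zero_mul, zero_mul, zero_mul]
      rw [hker, hfx, zero_mul, zero_mul, zero_mul]
      exact hasDerivAt_const z 0
    · have hne : wc x - z ≠ 0 := by
        intro h
        have := hx hfx z hz
        rw [h, norm_zero] at this; linarith
      have h1 : HasDerivAt (fun y : ℂ => wc x - y) (-1) z := (hasDerivAt_id z).const_sub (wc x)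
      have h2 := h1.inv hne
      have h3 := h2.const_mul (f x * (starRingEnd ℂ) (wc x) ^ 0 * wc x)
      have hg : (fun y : ℂ => f x * (starRingEnd ℂ) (wc x) ^ 0 * wc x * (wc x - y)⁻¹)
          = fun z : ℂ => ker f 0 z x := by
        funext y; rw [ker]
      rw [← hg]
      convert h3 using 1
      · rfl
      · rfl
      rw [div_eq_mul_inv]
      ring

lemma conj_wc_mul (x : AddCircle T) : (starRingEnd ℂ) (wc x) * wc x = 1 := by
  rw [mul_comm, Complex.mul_conj]
  exact_mod_cast Circle.normSq_coe (toCircle x)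

lemma G_zero (f : AddCircle T → ℂ) (m : ℕ) : G f m 0 = fourierCoeff f (m : ℤ) := by
  rw [G, ← integral_conj_pow f m]
  exact integral_congr_ae (Filter.Eventually.of_forall fun x => ker_zero f m x)

lemma good_ball {z : ℂ} (hz : ‖z‖ < 1) (x : AddCircle T) : 1 - ‖z‖ ≤ ‖wc x - z‖ := by
  have := norm_sub_norm_le (wc x) z
  rw [norm_wc] at this
  linarith

lemma integrable_ker_ball (hfi : Integrable f haarAddCircle) (m : ℕ) {z : ℂ} (hz : ‖z‖ < 1) :
    Integrable (ker f m z) haarAddCircle :=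
  integrable_ker hfi m (by linarith : (0:ℝ) < 1 - ‖z‖)
    (Filter.Eventually.of_forall fun x _ => good_ball hz x)

lemma ker_sub (f : AddCircle T → ℂ) (m : ℕ) {z : ℂ} (x : AddCircle T) (hne : wc x - z ≠ 0) :
    ker f m z x - ker f m 0 x
      = f x * (starRingEnd ℂ) (wc x) ^ m * (z * (wc x - z)⁻¹) := by
  rw [ker, ker_zero]
  calc f x * (starRingEnd ℂ) (wc x) ^ m * wc x * (wc x - z)⁻¹
        - f x * (starRingEnd ℂ) (wc x) ^ m
      = f x * (starRingEnd ℂ) (wc x) ^ m * wc x * (wc x - z)⁻¹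
        - f x * (starRingEnd ℂ) (wc x) ^ m * ((wc x - z) * (wc x - z)⁻¹) := by
        rw [mul_inv_cancel₀ hne, mul_one]
    _ = f x * (starRingEnd ℂ) (wc x) ^ m * (z * (wc x - z)⁻¹) := by ring

lemma ker_rec (f : AddCircle T → ℂ) (m : ℕ) {z : ℂ} (hz0 : z ≠ 0) (x : AddCircle T)
    (hne : wc x - z ≠ 0) :
    ker f (m + 1) z x = z⁻¹ * (ker f m z x - ker f m 0 x) := by
  rw [ker_sub f m x hne]
  rw [show z⁻¹ * (f x * (starRingEnd ℂ) (wc x) ^ m * (z * (wc x - z)⁻¹))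
        = (z⁻¹ * z) * (f x * (starRingEnd ℂ) (wc x) ^ m * (wc x - z)⁻¹) by ring,
    inv_mul_cancel₀ hz0, one_mul]
  rw [ker, pow_succ]
  rw [show f x * ((starRingEnd ℂ) (wc x) ^ m * (starRingEnd ℂ) (wc x)) * wc x * (wc x - z)⁻¹
        = ((starRingEnd ℂ) (wc x) * wc x) * (f x * (starRingEnd ℂ) (wc x) ^ m * (wc x - z)⁻¹)
      by ring, conj_wc_mul, one_mul]

lemma wc_sub_ne {z : ℂ} (hz : ‖z‖ < 1) (x : AddCircle T) : wc x - z ≠ 0 := by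
  intro h
  have := good_ball hz x
  rw [h, norm_zero] at this
  linarith

/-- The recurrence `G (m+1) z = z⁻¹ (G m z - G m 0)` inside the disc. -/
lemma G_rec (hfi : Integrable f haarAddCircle) (m : ℕ) {z : ℂ} (hz : ‖z‖ < 1) (hz0 : z ≠ 0) :
    G f (m + 1) z = z⁻¹ * (G f m z - G f m 0) := by
  rw [G, G, G, ← integral_sub (integrable_ker_ball hfi m hz)
    (integrable_ker_ball hfi m (by rw [norm_zero]; linarith)), ← smul_eq_mul, ← integral_smul]
  refine integral_congr_ae (Filter.Eventually.of_forall fun x => ?_)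
  show ker f (m + 1) z x = z⁻¹ • (ker f m z x - ker f m 0 x)
  rw [smul_eq_mul]
  exact ker_rec f m hz0 x (wc_sub_ne hz x)

/-- Continuity-type estimate for `G m` at `0`. -/
lemma G_est (hfi : Integrable f haarAddCircle) (m : ℕ) {z : ℂ} (hz : ‖z‖ < 1) :
    ‖G f m 0 - G f m z‖
      ≤ (∫ x, ‖f x‖ ∂haarAddCircle) * (‖z‖ * (1 - ‖z‖)⁻¹) := by
  have h0 : Integrable (ker f m 0) haarAddCircle :=
    integrable_ker_ball hfi m (by rw [norm_zero]; linarith)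
  have h1 : Integrable (ker f m z) haarAddCircle := integrable_ker_ball hfi m hz
  rw [G, G, ← integral_sub h0 h1]
  refine (norm_integral_le_integral_norm _).trans ?_
  rw [← integral_mul_const]
  refine integral_mono (h0.sub h1).norm (hfi.norm.mul_const _)
    (fun x => ?_)
  have he : ker f m 0 x - ker f m z x
      = -(f x * (starRingEnd ℂ) (wc x) ^ m * (z * (wc x - z)⁻¹)) := by
    rw [← ker_sub f m x (wc_sub_ne hz x)]; ring
  rw [he, norm_neg, norm_mul, norm_mul, norm_mul, norm_pow, RCLike.norm_conj, norm_wc,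
    one_pow, mul_one, norm_inv]
  have hb2 : ‖wc x - z‖⁻¹ ≤ (1 - ‖z‖)⁻¹ := by
    apply inv_anti₀ (by linarith) (good_ball hz x)
  exact mul_le_mul_of_nonneg_left
    (mul_le_mul_of_nonneg_left hb2 (norm_nonneg z)) (norm_nonneg (f x))
end Main
end Stmt3Aux

open Stmt3Aux

set_option maxHeartbeats 2000000 in
/-- Let `f ∈ L²(S¹)` be a Hardy space function (all negative Fourier
coefficients vanish).  If `f` vanishes a.e. on an open arc of positive measure, then
`f = 0` (a.e.). -/
theorem stmt3 [hT : Fact (0 < 2 * Real.pi)]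
    (f : AddCircle (2 * Real.pi) → ℂ)
    (hf : MemLp f 2 (haarAddCircle))
    (hHardy : ∀ n : ℤ, n < 0 → fourierCoeff f n = 0)
    (I : Set (AddCircle (2 * Real.pi)))
    (hIopen : IsOpen I)
    (hIpos : 0 < haarAddCircle I)
    (hvanish : ∀ᵐ x ∂(haarAddCircle), x ∈ I → f x = 0) :
    ∀ᵐ x ∂(haarAddCircle : Measure (AddCircle (2 * Real.pi))), f x = 0 := by
  have hfi : Integrable f haarAddCircle := hf.integrable (by norm_num)
  -- First, show all Fourier coefficients vanish.
  have hcoeff : ∀ n : ℤ, fourierCoeff f n = 0 := by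
    by_cases hIc : Iᶜ = ∅
    · -- f vanishes a.e. globally
      have hI : I = Set.univ := by rwa [Set.compl_empty_iff] at hIc
      have hfz : ∀ᵐ x ∂(haarAddCircle : Measure (AddCircle (2 * Real.pi))), f x = 0 := by
        filter_upwards [hvanish] with x hx
        exact hx (hI ▸ Set.mem_univ x)
      intro n
      rw [fourierCoeff]
      rw [integral_congr_ae (g := fun _ => (0:ℂ))
        (by filter_upwards [hfz] with x hx; rw [hx, smul_zero])]
      simp
    obtain ⟨p, hp⟩ : I.Nonempty := nonempty_of_measure_ne_zero hIpos.ne'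
    set K : Set ℂ := wc '' Iᶜ with hK
    have hKcl : IsClosed K := ((hIopen.isClosed_compl.isCompact).image continuous_wc).isClosed
    have hKne : K.Nonempty := (Set.nonempty_iff_ne_empty.mpr hIc).image _
    set z0 : ℂ := wc p with hz0def
    have hnz0 : ‖z0‖ = 1 := norm_wc p
    have hz0K : z0 ∉ K := by
      rintro ⟨q, hqI, hq⟩
      apply hqI
      have h2 : (toCircle q : ℂ) = (toCircle p : ℂ) := hq
      have h3 : q = p := injective_toCircle hT.out.ne' (Circle.coe_injective h2)
      rw [h3]; exact hp
    have hd0 : 0 < Metric.infDist z0 K := (hKcl.notMem_iff_infDist_pos hKne).1 hz0K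
    set d0 := Metric.infDist z0 K with hd0def
    set ε : ℝ := min (d0 / 2) (1 / 2) with hεdef
    have hε : 0 < ε := lt_min (by linarith) (by norm_num)
    have hε2 : ε ≤ d0 / 2 := min_le_left _ _
    have hε3 : ε ≤ 1 / 2 := min_le_right _ _
    set U : Set ℂ := ball (0 : ℂ) 1 ∪ ball z0 ε with hUdef
    have hUopen : IsOpen U := isOpen_ball.union isOpen_ball
    -- connecting point
    set y : ℂ := ((1 - ε / 2 : ℝ) : ℂ) * z0 with hydef
    have hy1 : y ∈ ball (0 : ℂ) 1 := by
      rw [mem_ball_zero_iff, hydef, norm_mul, Complex.norm_real, hnz0, mul_one,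
        Real.norm_eq_abs, _root_.abs_of_nonneg (show (0:ℝ) ≤ 1 - ε / 2 by linarith)]
      linarith
    have hy2 : y ∈ ball z0 ε := by
      rw [mem_ball, dist_eq_norm, show y - z0 = ((-(ε / 2) : ℝ) : ℂ) * z0 by
        rw [hydef]; push_cast; ring, norm_mul, Complex.norm_real, hnz0, mul_one,
        Real.norm_eq_abs, _root_.abs_of_nonpos (show -(ε / 2) ≤ (0:ℝ) by linarith), neg_neg]
      linarith
    have hUconn : IsPreconnected U :=
      IsPreconnected.union y hy1 hy2 (convex_ball _ _).isPreconnected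
        (convex_ball _ _).isPreconnected
    -- differentiability on U
    have hdiff : ∀ z ∈ U, DifferentiableAt ℂ (G f 0) z := by
      intro z hz
      rcases hz with hzb | hzb
      · rw [mem_ball_zero_iff] at hzb
        refine diffAt hfi (r := (1 - ‖z‖) / 2) (δ := (1 - ‖z‖) / 2)
          (by linarith) (by linarith) ?_
        refine Filter.Eventually.of_forall fun x _ z' hz' => ?_
        rw [mem_ball, dist_eq_norm] at hz'
        have h1 : ‖z'‖ - ‖z‖ ≤ ‖z' - z‖ := norm_sub_norm_le _ _
        have h2 : ‖z'‖ < 1 := by linarith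
        have h3 := good_ball h2 x
        linarith
      · have hzK : z ∉ K := by
          intro hmem
          have h1 : Metric.infDist z0 K ≤ dist z0 z := Metric.infDist_le_dist_of_mem hmem
          rw [mem_ball] at hzb
          rw [dist_comm] at h1
          linarith
        have hd : 0 < Metric.infDist z K := (hKcl.notMem_iff_infDist_pos hKne).1 hzK
        refine diffAt hfi (half_pos hd) (half_pos hd) ?_
        filter_upwards [hvanish] with x hx hfx z' hz'
        have hxI : x ∉ I := fun hxi => hfx (hx hxi)
        have hwK : wc x ∈ K := ⟨x, hxI, rfl⟩
        have h1 : Metric.infDist z K ≤ dist z (wc x) := Metric.infDist_le_dist_of_mem hwK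
        rw [mem_ball] at hz'
        have h3 : dist z (wc x) ≤ dist z z' + dist z' (wc x) := dist_triangle _ _ _
        have h5 : dist z z' = dist z' z := dist_comm _ _
        have h6 : dist z' (wc x) = dist (wc x) z' := dist_comm _ _
        rw [show ‖wc x - z'‖ = dist (wc x) z' from (dist_eq_norm _ _).symm]
        linarith
    have hana : AnalyticOnNhd ℂ (G f 0) U :=
      DifferentiableOn.analyticOnNhd (fun z hz => (hdiff z hz).differentiableWithinAt) hUopen
    -- G f 0 vanishes near an exterior point of U
    set z₁ : ℂ := ((1 + ε / 2 : ℝ) : ℂ) * z0 with hz₁def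
    have hz₁U : z₁ ∈ U := by
      right
      rw [mem_ball, dist_eq_norm, show z₁ - z0 = ((ε / 2 : ℝ) : ℂ) * z0 by
        rw [hz₁def]; push_cast; ring, norm_mul, Complex.norm_real, hnz0, mul_one,
        Real.norm_eq_abs, _root_.abs_of_nonneg (show (0:ℝ) ≤ ε / 2 by linarith)]
      linarith
    have hz₁n : 1 < ‖z₁‖ := by
      rw [hz₁def, norm_mul, Complex.norm_real, hnz0, mul_one, Real.norm_eq_abs,
        _root_.abs_of_nonneg (show (0:ℝ) ≤ 1 + ε / 2 by linarith)]
      linarith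
    have hVopen : IsOpen {z : ℂ | 1 < ‖z‖} := isOpen_lt continuous_const continuous_norm
    have hev : G f 0 =ᶠ[nhds z₁] 0 :=
      Filter.eventuallyEq_of_mem (hVopen.mem_nhds hz₁n)
        (fun z hz => G0_ext hfi hHardy hz)
    have hU0 : Set.EqOn (G f 0) 0 U :=
      hana.eqOn_zero_of_preconnected_of_eventuallyEq_zero hUconn hz₁U hev
    -- induction on m : G f m vanishes on the open unit disc
    have hQ : ∀ m : ℕ, ∀ z : ℂ, ‖z‖ < 1 → G f m z = 0 := by
      intro m
      induction m with
      | zero => exact fun z hz => hU0 (Or.inl (mem_ball_zero_iff.mpr hz))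
      | succ m ih =>
        have hzero : ∀ z : ℂ, ‖z‖ < 1 → z ≠ 0 → G f (m + 1) z = 0 := by
          intro z hz hz0
          rw [G_rec hfi m hz hz0, ih z hz, ih 0 (by simp), sub_zero, mul_zero]
        intro z hz
        by_cases hz0 : z = 0
        · subst hz0
          set C : ℝ := ∫ x, ‖f x‖ ∂(haarAddCircle : Measure (AddCircle (2 * Real.pi)))
            with hCdef
          have hC0 : 0 ≤ C := integral_nonneg fun x => norm_nonneg _
          have hle : ‖G f (m + 1) 0‖ ≤ 0 := by
            refine le_of_forall_pos_le_add fun η hη => ?_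
            set t : ℝ := min (1 / 2) (η / (2 * C + 1)) with htdef
            have ht0 : 0 < t := lt_min (by norm_num) (div_pos hη (by linarith))
            have htle : t ≤ 1 / 2 := min_le_left _ _
            have ht2 : t ≤ η / (2 * C + 1) := min_le_right _ _
            have hnorm : ‖((t : ℝ) : ℂ)‖ = t := by
              rw [Complex.norm_real, Real.norm_eq_abs, _root_.abs_of_pos ht0]
            have hlt : ‖((t : ℝ) : ℂ)‖ < 1 := by rw [hnorm]; linarith
            have hzt : G f (m + 1) ((t : ℝ) : ℂ) = 0 :=
              hzero _ hlt (Complex.ofReal_ne_zero.mpr ht0.ne')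
            have hinv : (1 - t)⁻¹ ≤ 2 := by
              rw [show (2 : ℝ) = (1 / 2 : ℝ)⁻¹ by norm_num]
              apply inv_anti₀ <;> linarith
            have e0 : ‖G f (m + 1) 0‖ ≤ C * (t * (1 - t)⁻¹) := by
              have := G_est hfi (m + 1) hlt
              rw [hzt, sub_zero, hnorm] at this
              exact this
            have e1 : C * (t * (1 - t)⁻¹) ≤ C * (t * 2) :=
              mul_le_mul_of_nonneg_left
                (mul_le_mul_of_nonneg_left hinv ht0.le) hC0
            have e2 : t * (2 * C + 1) ≤ η := by
              rw [← le_div_iff₀ (by linarith)]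
              exact ht2
            nlinarith
          exact norm_le_zero_iff.1 hle
        · exact hzero z hz hz0
    intro n
    rcases lt_or_ge n 0 with h | h
    · exact hHardy n h
    · have h1 := hQ n.toNat 0 (by simp)
      rw [G_zero] at h1
      rwa [Int.toNat_of_nonneg h] at h1
  -- now conclude `f = 0` a.e. via Parseval
  set F := hf.toLp f with hFdef
  have hFe : ⇑F =ᵐ[(haarAddCircle : Measure (AddCircle (2 * Real.pi)))] f := hf.coeFn_toLp
  have hcoeffF : ∀ n : ℤ, fourierCoeff (⇑F) n = 0 := by
    intro n
    rw [← hcoeff n, fourierCoeff, fourierCoeff]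
    refine integral_congr_ae ?_
    filter_upwards [hFe] with x hx
    rw [hx]
  have hparseval := tsum_sq_fourierCoeff F
  have hsumzero : (∑' i : ℤ, ‖fourierCoeff (⇑F) i‖ ^ 2) = 0 := by
    simp [hcoeffF]
  have hsq : ∫ t, ‖f t‖ ^ 2 ∂(haarAddCircle : Measure (AddCircle (2 * Real.pi))) = 0 := by
    rw [show (∫ t, ‖f t‖ ^ 2 ∂(haarAddCircle : Measure (AddCircle (2 * Real.pi))))
        = ∫ t, ‖F t‖ ^ 2 ∂(haarAddCircle : Measure (AddCircle (2 * Real.pi))) from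
      integral_congr_ae (by filter_upwards [hFe] with x hx; rw [hx])]
    rw [← hparseval, hsumzero]
  have h2 := hf.integrable_norm_rpow (by norm_num) (by norm_num)
  have h2' : Integrable (fun x => ‖f x‖ ^ 2)
      (haarAddCircle : Measure (AddCircle (2 * Real.pi))) := by
    have heq : (fun x => ‖f x‖ ^ ((2 : ℝ≥0∞).toReal)) = fun x => ‖f x‖ ^ 2 := by
      funext x
      rw [ENNReal.toReal_ofNat, show ((2:ℝ)) = ((2:ℕ):ℝ) by norm_num, Real.rpow_natCast]
    rwa [heq] at h2
  have hae := (integral_eq_zero_iff_of_nonneg (fun x => by positivity) h2').1 hsq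
  filter_upwards [hae] with x hx
  have hx' : ‖f x‖ ^ 2 = 0 := hx
  have : ‖f x‖ = 0 := by
    nlinarith [norm_nonneg (f x)]
  exact norm_eq_zero.1 this
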